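/- Let n ≥ 1, let f be a McNaughton homeomorphism of [0,1]^n, and let k ≥ 1. Then f maps the k-grid of [0,1]^n bijectively onto itself: a point σ ∈ [0,1]^n has rational coordinates with denominator k if and only if f(σ) has rational coordinates with denominator k. -/

import Mathlib

/-- f : ℝ^n → ℝ is a McNaughton function on the unit cube [0,1]^n: continuous on
the cube and piecewise equal, on the cube, to finitely many affine polynomials
with integer coefficients. -/
def IsMcNaughtonOn (n : ℕ) (f : (Fin n → ℝ) → ℝ) : Prop :=
  ContinuousOn f (Set.Icc 0 1) ∧
    ∃ (k : ℕ) (a : Fin k → Fin n → ℤ) (b : Fin k → ℤ),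
      ∀ x ∈ Set.Icc (0 : Fin n → ℝ) 1, ∃ i : Fin k,
        f x = (∑ j : Fin n, (a i j : ℝ) * x j) + (b i : ℝ)

/-- f is a McNaughton homeomorphism of [0,1]^n: a bijection of the cube onto
itself, with inverse g on the cube, all of whose coordinate functions (and those
of g) are McNaughton functions. -/
def IsMcNaughtonHomeo (n : ℕ) (f g : (Fin n → ℝ) → (Fin n → ℝ)) : Prop :=
  Set.BijOn f (Set.Icc 0 1) (Set.Icc 0 1) ∧
  (∀ x ∈ Set.Icc (0 : Fin n → ℝ) 1, g (f x) = x) ∧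
  (∀ y ∈ Set.Icc (0 : Fin n → ℝ) 1, f (g y) = y) ∧
  (∀ i : Fin n, IsMcNaughtonOn n (fun x => f x i)) ∧
  (∀ i : Fin n, IsMcNaughtonOn n (fun x => g x i))

/-- A point of [0,1]^n has denominator k: its coordinates are b_i / k with the
integers b_1, …, b_n, k relatively prime (gcd 1). -/
def HasDenominator (n k : ℕ) (x : Fin n → ℝ) : Prop :=
  ∃ b : Fin n → ℤ, (∀ i : Fin n, x i = (b i : ℝ) / (k : ℝ)) ∧
    Int.gcd (Finset.univ.gcd b) (k : ℤ) = 1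

lemma affine_denom {n : ℕ} {F : (Fin n → ℝ) → ℝ} (hF : IsMcNaughtonOn n F)
    {x : Fin n → ℝ} (hx : x ∈ Set.Icc (0 : Fin n → ℝ) 1) {m : ℕ} (hm : m ≠ 0)
    {c : Fin n → ℤ} (hc : ∀ j, x j = (c j : ℝ) / m) :
    ∃ d : ℤ, F x = (d : ℝ) / m := by
  obtain ⟨-, K, a, b, hab⟩ := hF
  obtain ⟨i, hi⟩ := hab x hx
  refine ⟨∑ j, a i j * c j + b i * m, ?_⟩
  have hm' : (m : ℝ) ≠ 0 := Nat.cast_ne_zero.mpr hm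
  rw [hi]
  simp only [hc]
  push_cast
  rw [eq_div_iff hm', add_mul, Finset.sum_mul]
  congr 1
  exact Finset.sum_congr rfl fun j _ => by field_simp

lemma key_denom {n k : ℕ} (hk : 1 ≤ k) {F G : (Fin n → ℝ) → (Fin n → ℝ)}
    (hF : ∀ i : Fin n, IsMcNaughtonOn n (fun x => F x i))
    (hG : ∀ i : Fin n, IsMcNaughtonOn n (fun y => G y i))
    {x : Fin n → ℝ} (hx : x ∈ Set.Icc (0 : Fin n → ℝ) 1)
    (hFx : F x ∈ Set.Icc (0 : Fin n → ℝ) 1) (hGF : G (F x) = x)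
    (h : HasDenominator n k x) : HasDenominator n k (F x) := by
  obtain ⟨b, hb, hbg⟩ := h
  have hk0 : k ≠ 0 := by omega
  have hc : ∀ i : Fin n, ∃ c : ℤ, F x i = (c : ℝ) / k := fun i =>
    affine_denom (hF i) hx hk0 hb
  choose c hcval using hc
  refine ⟨c, hcval, ?_⟩
  set e : ℕ := Int.gcd (Finset.univ.gcd c) (k : ℤ) with he
  have hek : (e : ℤ) ∣ (k : ℤ) := Int.gcd_dvd_right _ _
  have hekN : e ∣ k := Int.ofNat_dvd.mp hek
  have he0 : e ≠ 0 := by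
    intro h0
    rw [h0] at hekN
    omega
  obtain ⟨m, hm⟩ := hekN
  have hm0 : m ≠ 0 := by
    intro h0; rw [h0, mul_zero] at hm; omega
  have hec : ∀ i : Fin n, (e : ℤ) ∣ c i := fun i =>
    dvd_trans (Int.gcd_dvd_left _ _) (Finset.gcd_dvd (Finset.mem_univ i))
  choose c' hc' using hec
  have hFxm : ∀ i : Fin n, F x i = (c' i : ℝ) / m := by
    intro i
    rw [hcval i, hc' i, hm]
    have hm' : (m : ℝ) ≠ 0 := Nat.cast_ne_zero.mpr hm0
    have he' : (e : ℝ) ≠ 0 := Nat.cast_ne_zero.mpr he0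
    push_cast
    field_simp
  have hd : ∀ i : Fin n, ∃ d : ℤ, x i = (d : ℝ) / m := by
    intro i
    have := affine_denom (hG i) hFx hm0 hFxm
    rwa [hGF] at this
  choose d hdval using hd
  have heb : ∀ i : Fin n, (e : ℤ) ∣ b i := by
    intro i
    refine ⟨d i, ?_⟩
    have h1 : (b i : ℝ) / k = (d i : ℝ) / m := by rw [← hb i, hdval i]
    have hm' : (m : ℝ) ≠ 0 := Nat.cast_ne_zero.mpr hm0
    have hk' : (k : ℝ) ≠ 0 := Nat.cast_ne_zero.mpr hk0
    have h2 : (b i : ℝ) * m = (d i : ℝ) * k := by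
      field_simp at h1
      linarith [h1]
    have h3 : (b i) * (m : ℤ) = (d i) * (k : ℤ) := by exact_mod_cast h2
    have h4 : b i * (m : ℤ) = d i * e * m := by rw [h3, hm]; push_cast; ring
    have hmZ : (m : ℤ) ≠ 0 := Int.natCast_ne_zero.mpr hm0
    have h5 := mul_right_cancel₀ hmZ h4
    linarith [h5]
  have hegb : (e : ℤ) ∣ Finset.univ.gcd b := Finset.dvd_gcd (fun i _ => heb i)
  have hd1 : (e : ℤ) ∣ (Int.gcd (Finset.univ.gcd b) (k : ℤ) : ℤ) :=
    Int.dvd_coe_gcd hegb hek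
  rw [hbg] at hd1
  exact Nat.dvd_one.mp (Int.ofNat_dvd.mp (by exact_mod_cast hd1))

/-- a McNaughton homeomorphism of [0,1]^n maps the k-grid
bijectively onto itself: a point of the cube has denominator k iff its image
does. -/
theorem stmt_10 (n : ℕ) (hn : 1 ≤ n) (f g : (Fin n → ℝ) → (Fin n → ℝ))
    (hf : IsMcNaughtonHomeo n f g) (k : ℕ) (hk : 1 ≤ k) :
    ∀ x ∈ Set.Icc (0 : Fin n → ℝ) 1,
      (HasDenominator n k x ↔ HasDenominator n k (f x)) := by
  obtain ⟨hbij, hgf, hfg, hfm, hgm⟩ := hf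
  intro x hx
  have hfx : f x ∈ Set.Icc (0 : Fin n → ℝ) 1 := hbij.mapsTo hx
  constructor
  · intro h
    exact key_denom hk hfm hgm hx hfx (hgf x hx) h
  · intro h
    have hgfx : g (f x) ∈ Set.Icc (0 : Fin n → ℝ) 1 := by rw [hgf x hx]; exact hx
    have := key_denom hk hgm hfm hfx hgfx (hfg (f x) hfx) h
    rwa [hgf x hx] at this
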